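/- Let $m>0$, $\bar C\in\mathbb{R}$ with $\bar C\neq 0$, and $a\in\mathbb{R}$. There is no twice continuously differentiable nonnegative function $U:(a,\infty)\to\mathbb{R}$ satisfying $U''(x)+U(x)^m=\bar C$ for all $x>a$ and $U(x)\to 0$ as $x\to\infty$. -/

import Mathlib

open Filter Set

/-- With a nonzero chemical potential constant `C̄`, there is no nonnegative `C²`
function `U` on `(a, ∞)` solving `U'' + U^m = C̄` there and tending to `0` at `+∞`. -/
theorem no_unbounded_steady_component (m : ℝ) (hm : 0 < m) (Cbar : ℝ)
    (hCbar : Cbar ≠ 0) (a : ℝ) :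
    ¬ ∃ U U' U'' : ℝ → ℝ,
      (∀ x ∈ Set.Ioi a, HasDerivAt U (U' x) x) ∧
      (∀ x ∈ Set.Ioi a, HasDerivAt U' (U'' x) x) ∧
      ContinuousOn U'' (Set.Ioi a) ∧
      (∀ x ∈ Set.Ioi a, 0 ≤ U x) ∧
      (∀ x ∈ Set.Ioi a, U'' x + U x ^ m = Cbar) ∧
      Filter.Tendsto U Filter.atTop (nhds 0) := by
  rintro ⟨U, U', U'', hU, hU', -, hpos, heq, hlim⟩
  set s : ℝ := if 0 < Cbar then 1 else -1 with hs
  set c : ℝ := |Cbar| / 2 with hc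
  have hcpos : 0 < c := by positivity
  have hsC : s * Cbar = 2 * c := by
    rcases lt_or_gt_of_ne hCbar with h | h
    · simp only [hs, hc, if_neg (not_lt.mpr h.le)]
      rw [abs_of_neg h]; ring
    · simp only [hs, hc, if_pos h]
      rw [abs_of_pos h]; ring
  -- U^m → 0
  have hUm : Tendsto (fun x => U x ^ m) atTop (nhds 0) := by
    have hcont : ContinuousAt (fun y : ℝ => y ^ m) 0 :=
      Real.continuousAt_rpow_const 0 m (Or.inr hm.le)
    have := hcont.tendsto.comp hlim
    rwa [Real.zero_rpow hm.ne'] at this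
  -- U'' → Cbar
  have hU2 : Tendsto U'' atTop (nhds Cbar) := by
    have h1 : Tendsto (fun x => Cbar - U x ^ m) atTop (nhds Cbar) := by
      simpa using (tendsto_const_nhds.sub hUm)
    refine h1.congr' ?_
    filter_upwards [eventually_gt_atTop a] with x hx
    have := heq x hx
    linarith
  -- eventually s * U'' x ≥ c
  have hEv : ∀ᶠ x in atTop, c ≤ s * U'' x := by
    have h1 : ∀ᶠ x in atTop, U'' x ∈ Set.Ioo (Cbar - c) (Cbar + c) :=
      hU2.eventually (Ioo_mem_nhds (by linarith) (by linarith))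
    filter_upwards [h1] with x hx
    rcases lt_or_gt_of_ne hCbar with h | h
    · have hs1 : s = -1 := by simp [hs, not_lt.mpr h.le]
      have habs : |Cbar| = -Cbar := abs_of_neg h
      rw [hs1]
      have := hx.2
      have hc2 : c = -Cbar / 2 := by rw [hc, habs]
      nlinarith [hx.2]
    · have hs1 : s = 1 := by simp [hs, h]
      have habs : |Cbar| = Cbar := abs_of_pos h
      rw [hs1]
      have hc2 : c = Cbar / 2 := by rw [hc, habs]
      nlinarith [hx.1]
  obtain ⟨x₀, hx₀⟩ := (hEv.and (eventually_gt_atTop a)).exists_forall_of_atTop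
  have hx₀a : a < x₀ := (hx₀ x₀ le_rfl).2
  have hmem : ∀ x, x₀ ≤ x → x ∈ Set.Ioi a := fun x hx => lt_of_lt_of_le hx₀a hx
  -- g x = s * U' x - c * x is monotone on [x₀, ∞)
  set g : ℝ → ℝ := fun x => s * U' x - c * x with hg
  have hg' : ∀ x ∈ Set.Ioi a, HasDerivAt g (s * U'' x - c) x := by
    intro x hx
    have h1 := ((hU' x hx).const_mul s).sub ((hasDerivAt_id x).const_mul c)
    simpa [hg, mul_comm, Pi.sub_def] using h1
  have hgint : interior (Set.Ici x₀) = Set.Ioi x₀ := interior_Ici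
  have hgmono : MonotoneOn g (Set.Ici x₀) := by
    refine monotoneOn_of_deriv_nonneg (convex_Ici x₀) ?_ ?_ ?_
    · intro x hx
      exact (hg' x (hmem x hx)).continuousAt.continuousWithinAt
    · rw [hgint]; intro x hx
      exact ((hg' x (hmem x (le_of_lt hx))).differentiableAt).differentiableWithinAt
    · rw [hgint]; intro x hx
      rw [(hg' x (hmem x (le_of_lt hx))).deriv]
      have := (hx₀ x (le_of_lt hx)).1
      linarith
  -- h x = s * U x - B * x - (c/2)*(x-x₀)^2 is monotone on [x₀, ∞)
  set B : ℝ := s * U' x₀ with hB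
  set h : ℝ → ℝ := fun x => s * U x - B * x - c / 2 * (x - x₀) ^ 2 with hh
  have hh' : ∀ x ∈ Set.Ioi a, HasDerivAt h (s * U' x - B - c * (x - x₀)) x := by
    intro x hx
    have h1 := (((hU x hx).const_mul s).sub ((hasDerivAt_id x).const_mul B)).sub
      ((((hasDerivAt_id x).sub_const x₀).pow 2).const_mul (c / 2))
    simp only [id_eq] at h1
    refine h1.congr_deriv ?_
    push_cast
    ring
  have hhmono : MonotoneOn h (Set.Ici x₀) := by
    refine monotoneOn_of_deriv_nonneg (convex_Ici x₀) ?_ ?_ ?_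
    · intro x hx
      exact (hh' x (hmem x hx)).continuousAt.continuousWithinAt
    · rw [hgint]; intro x hx
      exact ((hh' x (hmem x (le_of_lt hx))).differentiableAt).differentiableWithinAt
    · rw [hgint]; intro x hx
      rw [(hh' x (hmem x (le_of_lt hx))).deriv]
      have := hgmono (Set.self_mem_Ici) (Set.mem_Ici.mpr (le_of_lt hx)) (le_of_lt hx)
      simp only [hg, hB] at this ⊢
      linarith
  -- quadratic lower bound
  have hbound : ∀ x, x₀ ≤ x →
      s * U x₀ + B * (x - x₀) + c / 2 * (x - x₀) ^ 2 ≤ s * U x := by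
    intro x hx
    have := hhmono (Set.self_mem_Ici) (Set.mem_Ici.mpr hx) hx
    simp only [hh] at this
    nlinarith [this]
  -- the quadratic tends to atTop
  have hquad : Tendsto (fun x => s * U x₀ + B * (x - x₀) + c / 2 * (x - x₀) ^ 2)
      atTop atTop := by
    have key : ∀ x : ℝ, s * U x₀ + B * (x - x₀) + c / 2 * (x - x₀) ^ 2
        = c / 2 * (x - x₀ + B / c) ^ 2 + (s * U x₀ - B ^ 2 / (2 * c)) := by
      intro x
      field_simp
      ring
    simp only [key]
    apply tendsto_atTop_add_const_right
    apply Tendsto.const_mul_atTop (by positivity : (0:ℝ) < c / 2)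
    have t1 : Tendsto (fun x : ℝ => x - x₀ + B / c) atTop atTop :=
      tendsto_atTop_add_const_right _ _ (tendsto_atTop_add_const_right _ _ tendsto_id)
    exact (tendsto_pow_atTop (two_ne_zero)).comp t1
  have hev2 : (fun x => s * U x₀ + B * (x - x₀) + c / 2 * (x - x₀) ^ 2)
      ≤ᶠ[atTop] fun x => s * U x := by
    filter_upwards [eventually_ge_atTop x₀] with x hx
    exact hbound x hx
  have hsU : Tendsto (fun x => s * U x) atTop atTop :=
    tendsto_atTop_mono' atTop hev2 hquad
  have hsU0 : Tendsto (fun x => s * U x) atTop (nhds 0) := by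
    simpa using hlim.const_mul s
  exact not_tendsto_atTop_of_tendsto_nhds hsU0 hsU
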